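/- Let α be an infinite cardinal and let M(α) be the space on the set of ordinals ≤ α whose open sets are exactly ∅-complement tails: the sets B_β = {γ ≤ α : γ ≥ β} for β = 0 or β < α a successor ordinal. If M(α) is a subspace of a topological space X, then there exists a continuous retraction f : X → M(α). -/

import Mathlib

open Filter Topology

universe u v

/-- The two points of the Sierpiński space. -/
inductive SPt : Type
  | zero
  | one
deriving DecidableEq

/-- The Sierpiński topology: `{zero}` is open, `{one}` is not. -/
instance : TopologicalSpace SPt := TopologicalSpace.generateFrom {{SPt.zero}}

/-- `A` is closed under limits of `o`-indexed transfinite sequences for all infinite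
ordinals `o ≤ β` (β an infinite cardinal, viewed as an ordinal). -/
def OrdSeqClosed {X : Type u} [TopologicalSpace X] (β : Cardinal.{u}) (A : Set X) : Prop :=
  ∀ o : Ordinal.{u}, Ordinal.omega0 ≤ o → o ≤ β.ord →
    ∀ f : o.ToType → X, (∀ i, f i ∈ A) →
    ∀ x : X, Filter.Tendsto f Filter.atTop (nhds x) → x ∈ A

/-- A space is β-sequential if every such subset is closed. -/
def IsBetaSequential (X : Type u) [TopologicalSpace X] (β : Cardinal.{u}) : Prop :=
  ∀ A : Set X, OrdSeqClosed β A → IsClosed A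

/-- `A` contains limits of all convergent transfinite sequences of its points. -/
def TransSeqClosed {X : Type u} [TopologicalSpace X] (A : Set X) : Prop :=
  ∀ o : Ordinal.{u}, Ordinal.omega0 ≤ o →
    ∀ f : o.ToType → X, (∀ i, f i ∈ A) →
    ∀ x : X, Filter.Tendsto f Filter.atTop (nhds x) → x ∈ A

/-- Pseudoradial space. -/
def IsPseudoradial (X : Type u) [TopologicalSpace X] : Prop :=
  ∀ A : Set X, TransSeqClosed A → IsClosed A

/-- The underlying set of the space `M(α)`: ordinals `≤ α`. -/
structure MPt (α : Cardinal.{u}) : Type (u + 1) where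
  val : Ordinal.{u}
  le : val ≤ α.ord

/-- The topology of `M(α)`: open sets are the tails `B_β = {γ ≤ α : γ ≥ β}` for `β = 0`
or `β` a successor ordinal `< α`. -/
instance MPt.instTopologicalSpace (α : Cardinal.{u}) : TopologicalSpace (MPt α) :=
  TopologicalSpace.generateFrom
    {S : Set (MPt α) | ∃ β : Ordinal.{u},
      (β = 0 ∨ (β < α.ord ∧ ∃ δ : Ordinal.{u}, β = Order.succ δ)) ∧
      S = {γ : MPt α | β ≤ γ.val}}

/-- If `M(α)` is a subspace of `X`, there is a continuous retraction of `X`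
onto `M(α)`. -/
theorem retraction_onto_M (α : Cardinal.{u}) (hα : Cardinal.aleph0 ≤ α)
    (X : Type v) [TopologicalSpace X] (e : MPt α → X) (he : Topology.IsEmbedding e) :
    ∃ f : X → MPt α, Continuous f ∧ ∀ m, f (e m) = m := by
  classical
  have hlim : Order.IsSuccLimit α.ord := Cardinal.isSuccLimit_ord hα
  set S : Set Ordinal.{u} :=
    {β | β = 0 ∨ (β < Cardinal.ord α ∧ ∃ δ : Ordinal.{u}, β = Order.succ δ)} with hSdef
  have hSle : ∀ β ∈ S, β ≤ α.ord := by
    rintro β (rfl | ⟨h, _⟩)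
    · exact zero_le
    · exact le_of_lt h
  have hBopen : ∀ β ∈ S, IsOpen {γ : MPt α | β ≤ γ.val} := by
    intro β hβ
    exact TopologicalSpace.isOpen_generateFrom_of_mem ⟨β, hβ, rfl⟩
  have hV : ∀ β : Ordinal.{u}, ∃ V : Set X, IsOpen V ∧
      (β ∈ S → e ⁻¹' V = {γ : MPt α | β ≤ γ.val}) := by
    intro β
    by_cases hβ : β ∈ S
    · have h1 := hBopen β hβ
      rw [he.toIsInducing.isOpen_iff] at h1
      obtain ⟨t, ht, hpre⟩ := h1
      exact ⟨t, ht, fun _ => hpre⟩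
    · exact ⟨∅, isOpen_empty, fun h => absurd h hβ⟩
  choose V hVopen hVpre using hV
  set T : X → Set Ordinal.{u} := fun x => {β | β ∈ S ∧ x ∈ V β} with hTdef
  have hTbdd : ∀ x, BddAbove (T x) := fun x => ⟨α.ord, fun β hβ => hSle β hβ.1⟩
  have hTle : ∀ x, sSup (T x) ≤ α.ord := fun x => csSup_le' (fun β hβ => hSle β hβ.1)
  refine ⟨fun x => ⟨sSup (T x), hTle x⟩, ?_, ?_⟩
  · -- continuity
    rw [continuous_generateFrom_iff]
    rintro s ⟨β, hβ, rfl⟩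
    rcases hβ with rfl | ⟨hβlt, δ, rfl⟩
    · convert isOpen_univ
      ext x
      simp [zero_le]
    · have key : (fun x => (⟨sSup (T x), hTle x⟩ : MPt α)) ⁻¹'
          {γ : MPt α | Order.succ δ ≤ γ.val}
          = ⋃ γ, ⋃ (_ : γ ∈ S ∧ Order.succ δ ≤ γ), V γ := by
        ext x
        simp only [Set.mem_preimage, Set.mem_setOf_eq, Set.mem_iUnion]
        constructor
        · intro hx
          by_contra hcon
          push_neg at hcon
          have hb : sSup (T x) ≤ δ := by
            apply csSup_le'
            intro γ hγ
            by_contra hγδ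
            push_neg at hγδ
            exact hcon γ ⟨hγ.1, Order.succ_le_of_lt hγδ⟩ hγ.2
          exact absurd (hx.trans hb) (by simp [Order.succ_le_iff])
        · rintro ⟨γ, ⟨hγS, hδγ⟩, hxV⟩
          exact hδγ.trans (le_csSup (hTbdd x) ⟨hγS, hxV⟩)
      rw [key]
      exact isOpen_iUnion fun γ => isOpen_iUnion fun _ => hVopen γ
  · -- retraction
    intro m
    have hval : sSup (T (e m)) = m.val := by
      apply le_antisymm
      · apply csSup_le'
        rintro β ⟨hβS, hβV⟩
        have : m ∈ e ⁻¹' V β := hβV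
        rwa [hVpre β hβS] at this
      · by_contra hlt
        push_neg at hlt
        have h1 : Order.succ (sSup (T (e m))) ≤ m.val := Order.succ_le_of_lt hlt
        have h2 : sSup (T (e m)) < α.ord := lt_of_lt_of_le hlt m.le
        have h3 : Order.succ (sSup (T (e m))) ∈ S :=
          Or.inr ⟨hlim.succ_lt h2, _, rfl⟩
        have h4 : e m ∈ V (Order.succ (sSup (T (e m)))) := by
          have : m ∈ e ⁻¹' V (Order.succ (sSup (T (e m)))) := by
            rw [hVpre _ h3]; exact h1
          exact this
        have h5 : Order.succ (sSup (T (e m))) ≤ sSup (T (e m)) :=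
          le_csSup (hTbdd (e m)) ⟨h3, h4⟩
        exact absurd h5 (by simp)
    cases m
    simpa using hval
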